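/- For positive definite density matrices ρ₁₂, σ₁₂ on H₁ ⊗ H₂ with marginals ρ₁, σ₁, set Δ = (1/2)D(ρ₁₂‖σ₁₂) − (1/2)D(ρ₁‖σ₁). Then e^{−Δ} ≤ Tr[√ρ₁₂ · exp{(1/2) ln σ₁₂ − (1/2) ln(σ₁ ⊗ I₂) + (1/2) ln(ρ₁ ⊗ I₂)}]. -/

import Mathlib

open Matrix Kronecker
open scoped ComplexOrder

noncomputable def mexp {n : Type*} [Fintype n] [DecidableEq n] (A : Matrix n n ℂ) : Matrix n n ℂ :=
  if h : A.IsHermitian then h.cfc Real.exp else 0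

noncomputable def mlog {n : Type*} [Fintype n] [DecidableEq n] (A : Matrix n n ℂ) : Matrix n n ℂ :=
  if h : A.IsHermitian then h.cfc Real.log else 0

open scoped Classical in
noncomputable def msqrt {n : Type*} [Fintype n] [DecidableEq n] (A : Matrix n n ℂ) : Matrix n n ℂ :=
  if h : A.PosSemidef then h.1.cfc Real.sqrt else 0

noncomputable def entropy {n : Type*} [Fintype n] [DecidableEq n] (ρ : Matrix n n ℂ) : ℝ :=
  -((ρ * mlog ρ).trace.re)

noncomputable def relEnt {n : Type*} [Fintype n] [DecidableEq n] (ρ σ : Matrix n n ℂ) : ℝ :=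
  ((ρ * (mlog ρ - mlog σ)).trace.re)

noncomputable def ptrace₂ {n m : Type*} [Fintype n] [Fintype m]
    (ρ : Matrix (n × m) (n × m) ℂ) : Matrix n n ℂ :=
  Matrix.of fun i j => ∑ k, ρ (i, k) (j, k)

noncomputable def ptrace₁ {n m : Type*} [Fintype n] [Fintype m]
    (ρ : Matrix (n × m) (n × m) ℂ) : Matrix m m ℂ :=
  Matrix.of fun i j => ∑ k, ρ (k, i) (k, j)

noncomputable def traceNorm {n : Type*} [Fintype n] [DecidableEq n] (A : Matrix n n ℂ) : ℝ :=
  ((Matrix.posSemidef_conjTranspose_mul_self A).1.cfc Real.sqrt).trace.re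

/-! ### Auxiliary lemmas -/

set_option linter.unusedSectionVars false

section Aux

variable {d : Type*} [Fintype d] [DecidableEq d]

lemma trace_diag_conj (a b : d → ℝ) (N : Matrix d d ℂ) :
    (Matrix.diagonal (fun i => (a i : ℂ)) * (N * Matrix.diagonal (fun j => (b j : ℂ)) * Nᴴ)).trace
      = ∑ i, ∑ j, ((a i * b j * Complex.normSq (N i j) : ℝ) : ℂ) := by
  rw [Matrix.trace]
  refine Finset.sum_congr rfl fun i _ => ?_
  rw [Matrix.diag]
  rw [Matrix.diagonal_mul]
  rw [Matrix.mul_apply]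
  rw [Finset.mul_sum]
  refine Finset.sum_congr rfl fun j _ => ?_
  rw [Matrix.mul_diagonal, Matrix.conjTranspose_apply]
  push_cast
  have : N i j * (starRingEnd ℂ) (N i j) = (Complex.normSq (N i j) : ℂ) := Complex.mul_conj _
  calc (a i : ℂ) * (N i j * (b j : ℂ) * star (N i j))
      = (a i : ℂ) * (b j : ℂ) * (N i j * star (N i j)) := by ring
    _ = _ := by rw [show (star (N i j) : ℂ) = (starRingEnd ℂ) (N i j) from rfl, this]

lemma cfc_mul_cfc_trace {A B : Matrix d d ℂ} (hA : A.IsHermitian) (hB : B.IsHermitian)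
    (f g : ℝ → ℝ) :
    (hA.cfc f * hB.cfc g).trace
      = ∑ i, ∑ j, ((f (hA.eigenvalues i) * g (hB.eigenvalues j) *
          Complex.normSq ((star (hA.eigenvectorUnitary : Matrix d d ℂ) *
            (hB.eigenvectorUnitary : Matrix d d ℂ)) i j) : ℝ) : ℂ) := by
  set U := (hA.eigenvectorUnitary : Matrix d d ℂ)
  set V := (hB.eigenvectorUnitary : Matrix d d ℂ)
  have hU : star U * U = 1 := (Matrix.mem_unitaryGroup_iff').mp hA.eigenvectorUnitary.2
  have hN : (star U * V)ᴴ = star V * U := by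
    rw [Matrix.star_eq_conjTranspose, Matrix.star_eq_conjTranspose, Matrix.conjTranspose_mul,
      Matrix.conjTranspose_conjTranspose]
  have key : hA.cfc f * hB.cfc g
      = U * (Matrix.diagonal (fun i => ((f (hA.eigenvalues i) : ℝ) : ℂ)) *
          ((star U * V) * Matrix.diagonal (fun j => ((g (hB.eigenvalues j) : ℝ) : ℂ)) *
            (star U * V)ᴴ)) * star U := by
    rw [hN]
    have hU2 : U * star U = 1 := (Matrix.mem_unitaryGroup_iff).mp hA.eigenvectorUnitary.2
    simp only [Matrix.IsHermitian.cfc, Function.comp_def, Unitary.conjStarAlgAut_apply]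
    simp only [Matrix.mul_assoc]
    rw [hU2, Matrix.mul_one]
    rfl
  rw [key, Matrix.trace_mul_cycle (U) _ (star U), ← Matrix.mul_assoc, hU, Matrix.one_mul,
    trace_diag_conj]

lemma re_double (f : d → d → ℝ) :
    (∑ i, ∑ j, ((f i j : ℝ) : ℂ)).re = ∑ i, ∑ j, f i j := by
  have h : (∑ i, ∑ j, ((f i j : ℝ) : ℂ)) = ((∑ i, ∑ j, f i j : ℝ) : ℂ) := by push_cast; rfl
  rw [h, Complex.ofReal_re]

lemma sum_eigen {A : Matrix d d ℂ} (hA : A.IsHermitian) :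
    A.trace = ∑ i, (hA.eigenvalues i : ℂ) := by
  conv_lhs => rw [hA.spectral_theorem, Unitary.conjStarAlgAut_apply]
  rw [Matrix.trace_mul_cycle,
    (Matrix.mem_unitaryGroup_iff').mp hA.eigenvectorUnitary.2, Matrix.one_mul,
    Matrix.trace_diagonal]
  rfl

lemma row_normSq {N : Matrix d d ℂ} (h : N * Nᴴ = 1) (i : d) :
    ∑ j, Complex.normSq (N i j) = 1 := by
  have h1 : (N * Nᴴ) i i = (1 : Matrix d d ℂ) i i := by rw [h]
  rw [Matrix.mul_apply, Matrix.one_apply_eq] at h1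
  have h2 : ((∑ j, Complex.normSq (N i j) : ℝ) : ℂ) = 1 := by
    push_cast
    rw [← h1]
    refine Finset.sum_congr rfl fun j _ => ?_
    rw [Matrix.conjTranspose_apply, ← Complex.mul_conj]
    rfl
  exact_mod_cast h2

lemma msqrt_eq {ρ : Matrix d d ℂ} (hρ : ρ.PosDef) : msqrt ρ = hρ.1.cfc Real.sqrt := by
  rw [msqrt, dif_pos hρ.posSemidef]

lemma self_eq_cfc_id {A : Matrix d d ℂ} (hA : A.IsHermitian) : A = hA.cfc id := by
  conv_lhs => rw [hA.spectral_theorem]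
  rfl

lemma key_jensen (ρ G : Matrix d d ℂ) (hρ : ρ.PosDef) (hG : G.IsHermitian) (ht : ρ.trace = 1) :
    Real.exp ((ρ * G).trace.re - (1/2) * (ρ * mlog ρ).trace.re)
      ≤ (msqrt ρ * mexp G).trace.re := by
  set U := (hρ.1.eigenvectorUnitary : Matrix d d ℂ) with hUdef
  set V := (hG.eigenvectorUnitary : Matrix d d ℂ) with hVdef
  set N := star U * V with hNdef
  set p := hρ.1.eigenvalues with hpdef
  set g := hG.eigenvalues with hgdef
  have hUu : star U * U = 1 := (Matrix.mem_unitaryGroup_iff').mp hρ.1.eigenvectorUnitary.2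
  have hVu2 : V * star V = 1 := (Matrix.mem_unitaryGroup_iff).mp hG.eigenvectorUnitary.2
  have hNN : N * Nᴴ = 1 := by
    rw [hNdef, Matrix.conjTranspose_mul, ← Matrix.star_eq_conjTranspose V,
      ← Matrix.star_eq_conjTranspose (star U), star_star, Matrix.mul_assoc,
      ← Matrix.mul_assoc V, hVu2, Matrix.one_mul, hUu]
  have hppos : ∀ i, 0 < p i := fun i => hρ.eigenvalues_pos i
  have hrow : ∀ i, ∑ j, Complex.normSq (N i j) = 1 := row_normSq hNN
  have hsum_p : ∑ i, p i = 1 := by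
    have h0 := (sum_eigen hρ.1).symm.trans ht
    have h2 : ((∑ i, p i : ℝ) : ℂ) = 1 := by push_cast; exact h0
    exact_mod_cast h2
  have tr1 : (ρ * G).trace.re = ∑ i, ∑ j, p i * g j * Complex.normSq (N i j) := by
    have e1 : ρ * G = hρ.1.cfc id * hG.cfc id := by
      rw [← self_eq_cfc_id, ← self_eq_cfc_id]
    rw [e1, cfc_mul_cfc_trace, re_double]
    rfl
  have tr2 : (ρ * mlog ρ).trace.re = ∑ i, p i * Real.log (p i) := by
    have e2 : ρ * mlog ρ = hρ.1.cfc id * hρ.1.cfc Real.log := by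
      rw [mlog, dif_pos hρ.1, ← self_eq_cfc_id]
    rw [e2, cfc_mul_cfc_trace, re_double, hUu]
    refine Finset.sum_congr rfl fun i _ => ?_
    have hone : ∀ j, Complex.normSq ((1 : Matrix d d ℂ) i j) = if i = j then 1 else 0 := by
      intro j; by_cases h : i = j <;> simp [Matrix.one_apply, h]
    simp only [hone, mul_ite, mul_one, mul_zero, Finset.sum_ite_eq, Finset.mem_univ, if_true]
    rfl
  have tr3 : (msqrt ρ * mexp G).trace.re
      = ∑ i, ∑ j, Real.sqrt (p i) * Real.exp (g j) * Complex.normSq (N i j) := by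
    rw [msqrt_eq hρ, mexp, dif_pos hG, cfc_mul_cfc_trace, re_double]
  set w : d × d → ℝ := fun q => p q.1 * Complex.normSq (N q.1 q.2) with hwdef
  set tt : d × d → ℝ := fun q => g q.2 - (1/2) * Real.log (p q.1) with httdef
  have h₀ : ∀ q ∈ Finset.univ, (0:ℝ) ≤ w q := fun q _ =>
    mul_nonneg (hppos q.1).le (Complex.normSq_nonneg _)
  have h₁ : ∑ q : d × d, w q = 1 := by
    rw [Fintype.sum_prod_type]
    calc ∑ i, ∑ j, p i * Complex.normSq (N i j)
        = ∑ i, p i * ∑ j, Complex.normSq (N i j) :=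
          Finset.sum_congr rfl fun i _ => (Finset.mul_sum _ _ _).symm
      _ = ∑ i, p i := Finset.sum_congr rfl fun i _ => by rw [hrow i, mul_one]
      _ = 1 := hsum_p
  have jensen := convexOn_exp.map_sum_le (t := Finset.univ) (p := tt) h₀ h₁
    (fun q _ => Set.mem_univ _)
  simp only [smul_eq_mul] at jensen
  have lhs_eq : ∑ q : d × d, w q * tt q
      = (ρ * G).trace.re - (1/2) * (ρ * mlog ρ).trace.re := by
    rw [Fintype.sum_prod_type, tr1, tr2]
    have hi : ∀ i, ∑ j, w (i, j) * tt (i, j)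
        = (∑ j, p i * g j * Complex.normSq (N i j)) - (1/2) * (p i * Real.log (p i)) := by
      intro i
      have e : ∑ j, w (i, j) * tt (i, j)
          = ∑ j, (p i * g j * Complex.normSq (N i j)
              - (1/2) * (p i * Real.log (p i)) * Complex.normSq (N i j)) :=
        Finset.sum_congr rfl fun j _ => by simp only [hwdef, httdef]; ring
      rw [e, Finset.sum_sub_distrib, ← Finset.mul_sum, hrow i, mul_one]
    rw [show ∑ i, ∑ j, w (i, j) * tt (i, j)
        = ∑ i, ((∑ j, p i * g j * Complex.normSq (N i j)) - (1/2) * (p i * Real.log (p i))) from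
      Finset.sum_congr rfl fun i _ => hi i]
    rw [Finset.sum_sub_distrib, ← Finset.mul_sum]
  have rhs_eq : ∑ q : d × d, w q * Real.exp (tt q)
      = (msqrt ρ * mexp G).trace.re := by
    rw [Fintype.sum_prod_type, tr3]
    refine Finset.sum_congr rfl fun i _ => Finset.sum_congr rfl fun j _ => ?_
    simp only [hwdef, httdef]
    have hl : Real.exp (Real.log (p i)) = p i := Real.exp_log (hppos i)
    have h2 : Real.exp (Real.log (p i)/2) ^ 2 = p i := by
      rw [sq, ← Real.exp_add, show Real.log (p i)/2 + Real.log (p i)/2 = Real.log (p i) by ring,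
        hl]
    have hs : Real.sqrt (p i) = Real.exp (Real.log (p i)/2) := by
      conv_lhs => rw [← h2]
      rw [Real.sqrt_sq (Real.exp_pos _).le]
    calc p i * Complex.normSq (N i j) * Real.exp (g j - 1/2 * Real.log (p i))
        = (Real.exp (Real.log (p i)) * Real.exp (g j - 1/2 * Real.log (p i)))
            * Complex.normSq (N i j) := by rw [hl]; ring
      _ = Real.exp (Real.log (p i) + (g j - 1/2 * Real.log (p i))) * Complex.normSq (N i j) := by
          rw [Real.exp_add]
      _ = Real.exp (Real.log (p i)/2 + g j) * Complex.normSq (N i j) := by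
          congr 2; ring
      _ = Real.sqrt (p i) * Real.exp (g j) * Complex.normSq (N i j) := by
          rw [Real.exp_add, hs]
  rw [← lhs_eq, ← rhs_eq]
  exact jensen

lemma cfc_isHermitian {A : Matrix d d ℂ} (hA : A.IsHermitian) (f : ℝ → ℝ) :
    (hA.cfc f).IsHermitian := by
  rw [← Matrix.IsHermitian.cfc_eq]
  exact cfc_predicate f A

lemma mlog_isHermitian {A : Matrix d d ℂ} (hA : A.IsHermitian) : (mlog A).IsHermitian := by
  rw [mlog, dif_pos hA]
  exact cfc_isHermitian hA _

lemma half_smul_isHermitian {A : Matrix d d ℂ} (hA : A.IsHermitian) :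
    ((1/2 : ℂ) • A).IsHermitian := by
  rw [Matrix.IsHermitian, Matrix.conjTranspose_smul, hA]
  congr 1
  simp [Complex.ext_iff]

end Aux

section Kron

variable {n m : Type*} [Fintype n] [DecidableEq n] [Fintype m] [DecidableEq m]

lemma kron_one_conjTranspose (X : Matrix n n ℂ) :
    (X ⊗ₖ (1 : Matrix m m ℂ))ᴴ = Xᴴ ⊗ₖ (1 : Matrix m m ℂ) := by
  ext i j
  simp only [Matrix.conjTranspose_apply, Matrix.kroneckerMap_apply, Matrix.one_apply]
  by_cases h : j.2 = i.2
  · rw [if_pos h, if_pos h.symm, mul_one, mul_one]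
  · have h' : ¬ i.2 = j.2 := fun hh => h hh.symm
    simp [h, h']

noncomputable def kron1Hom : Matrix n n ℂ →⋆ₐ[ℂ] Matrix (n × m) (n × m) ℂ where
  toFun X := X ⊗ₖ (1 : Matrix m m ℂ)
  map_one' := Matrix.one_kronecker_one
  map_mul' X Y := by rw [← Matrix.mul_kronecker_mul, Matrix.one_mul]
  map_zero' := Matrix.zero_kronecker 1
  map_add' X Y := Matrix.add_kronecker X Y 1
  commutes' r := by
    simp only [Algebra.algebraMap_eq_smul_one]
    rw [Matrix.smul_kronecker, Matrix.one_kronecker_one]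
  map_star' X := by
    show (star X) ⊗ₖ (1 : Matrix m m ℂ) = star (X ⊗ₖ (1 : Matrix m m ℂ))
    rw [Matrix.star_eq_conjTranspose, Matrix.star_eq_conjTranspose, kron_one_conjTranspose]

lemma kron1Hom_continuous : Continuous (kron1Hom (n := n) (m := m)) := by
  have : (kron1Hom (n := n) (m := m) : Matrix n n ℂ → Matrix (n×m) (n×m) ℂ) =
      fun X => X ⊗ₖ (1 : Matrix m m ℂ) := rfl
  rw [this]
  apply continuous_matrix
  intro i j
  show Continuous fun X : Matrix n n ℂ => X i.1 j.1 * (1 : Matrix m m ℂ) i.2 j.2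
  exact (continuous_id.matrix_elem i.1 j.1).mul continuous_const

lemma mlog_kron {A : Matrix n n ℂ} (hA : A.PosDef) :
    mlog (A ⊗ₖ (1 : Matrix m m ℂ)) = (mlog A) ⊗ₖ (1 : Matrix m m ℂ) := by
  have hAH : A.IsHermitian := hA.1
  have hsa : IsSelfAdjoint A := hAH
  have hkH : (A ⊗ₖ (1 : Matrix m m ℂ)).IsHermitian := by
    rw [Matrix.IsHermitian, kron_one_conjTranspose, hAH]
  have hsa' : IsSelfAdjoint (kron1Hom (m := m) A) := hkH
  have hlog : ContinuousOn Real.log (spectrum ℝ A) := by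
    intro x hx
    rw [hAH.spectrum_real_eq_range_eigenvalues] at hx
    obtain ⟨i, rfl⟩ := hx
    exact (Real.continuousAt_log (ne_of_gt (hA.eigenvalues_pos i))).continuousWithinAt
  rw [mlog, mlog, dif_pos hAH, dif_pos hkH, ← Matrix.IsHermitian.cfc_eq,
    ← Matrix.IsHermitian.cfc_eq]
  exact (StarAlgHomClass.map_cfc (kron1Hom (m := m)) Real.log A hlog
    kron1Hom_continuous hsa hsa').symm

lemma ptrace₂_isHermitian {ρ : Matrix (n × m) (n × m) ℂ} (h : ρ.IsHermitian) :
    (ptrace₂ ρ).IsHermitian := by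
  ext i j
  simp only [Matrix.conjTranspose_apply, ptrace₂, Matrix.of_apply, star_sum]
  exact Finset.sum_congr rfl fun k _ => h.apply (i, k) (j, k)

lemma trace_mul_kron_one (ρ : Matrix (n × m) (n × m) ℂ) (X : Matrix n n ℂ) :
    (ρ * (X ⊗ₖ (1 : Matrix m m ℂ))).trace = (ptrace₂ ρ * X).trace := by
  simp only [Matrix.trace, Matrix.diag_apply, Matrix.mul_apply, ptrace₂, Matrix.of_apply,
    Matrix.kroneckerMap_apply, Matrix.one_apply, Fintype.sum_prod_type]
  simp only [mul_ite, mul_one, mul_zero, Finset.sum_ite_eq', Finset.mem_univ, if_true,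
    Finset.sum_mul]
  refine Finset.sum_congr rfl fun i _ => ?_
  exact Finset.sum_comm

lemma ptrace₂_posDef [Nonempty m] {ρ : Matrix (n × m) (n × m) ℂ} (hρ : ρ.PosDef) :
    (ptrace₂ ρ).PosDef := by
  refine .of_dotProduct_mulVec_pos (ptrace₂_isHermitian hρ.1) fun x hx => ?_
  set y : m → (n × m → ℂ) := fun k => fun a => if a.2 = k then x a.1 else 0 with hydef
  have hy : ∀ k : m, y k ≠ 0 := by
    intro k hk
    obtain ⟨i, hi⟩ := Function.ne_iff.mp hx
    exact hi (by simpa [hydef] using congrFun hk (i, k))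
  have hk : ∀ k, dotProduct (star (y k)) (ρ *ᵥ y k)
      = ∑ i, ∑ j, star (x i) * (ρ (i,k) (j,k) * x j) := by
    intro k
    simp only [dotProduct, Matrix.mulVec, Pi.star_apply, hydef, Fintype.sum_prod_type,
      apply_ite (star : ℂ → ℂ), star_zero, ite_mul, zero_mul, mul_ite, mul_zero]
    simp only [Finset.sum_ite_eq', Finset.mem_univ, if_true]
    exact Finset.sum_congr rfl fun i _ => Finset.mul_sum _ _ _
  have key : dotProduct (star x) ((ptrace₂ ρ) *ᵥ x)
      = ∑ k, dotProduct (star (y k)) (ρ *ᵥ y k) := by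
    have e1 : dotProduct (star x) ((ptrace₂ ρ) *ᵥ x)
        = ∑ i, ∑ j, ∑ k, star (x i) * (ρ (i,k) (j,k) * x j) := by
      simp only [dotProduct, Matrix.mulVec, ptrace₂, Matrix.of_apply, Pi.star_apply]
      refine Finset.sum_congr rfl fun i _ => ?_
      rw [Finset.mul_sum]
      refine Finset.sum_congr rfl fun j _ => ?_
      rw [Finset.sum_mul, Finset.mul_sum]
    rw [e1]
    rw [show (∑ i, ∑ j, ∑ k, star (x i) * (ρ (i,k) (j,k) * x j))
        = ∑ i, ∑ k, ∑ j, star (x i) * (ρ (i,k) (j,k) * x j) from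
      Finset.sum_congr rfl fun i _ => Finset.sum_comm]
    rw [Finset.sum_comm]
    exact Finset.sum_congr rfl fun k _ => (hk k).symm
  rw [key]
  exact Finset.sum_pos (fun k _ => hρ.dotProduct_mulVec_pos (hy k)) Finset.univ_nonempty

end Kron

theorem stmt19 {n m : Type*} [Fintype n] [DecidableEq n] [Fintype m] [DecidableEq m]
    (ρ₁₂ σ₁₂ : Matrix (n × m) (n × m) ℂ) (hρ : ρ₁₂.PosDef) (hσ : σ₁₂.PosDef)
    (htρ : ρ₁₂.trace = 1) (htσ : σ₁₂.trace = 1) :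
    Real.exp (-((1/2) * relEnt ρ₁₂ σ₁₂ - (1/2) * relEnt (ptrace₂ ρ₁₂) (ptrace₂ σ₁₂))) ≤
      (msqrt ρ₁₂ *
        mexp ((1/2 : ℂ) • mlog σ₁₂ -
          (1/2 : ℂ) • mlog (ptrace₂ σ₁₂ ⊗ₖ (1 : Matrix m m ℂ)) +
          (1/2 : ℂ) • mlog (ptrace₂ ρ₁₂ ⊗ₖ (1 : Matrix m m ℂ)))).trace.re := by
  -- nonemptiness
  have hne : Nonempty (n × m) := by
    rcases isEmpty_or_nonempty (n × m) with h | h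
    · exfalso
      rw [Matrix.trace] at htρ
      simp only [Finset.univ_eq_empty, Finset.sum_empty] at htρ
      exact zero_ne_one htρ
    · exact h
  haveI : Nonempty m := ⟨hne.some.2⟩
  -- marginals
  have hρ₁ : (ptrace₂ ρ₁₂).PosDef := ptrace₂_posDef hρ
  have hσ₁ : (ptrace₂ σ₁₂).PosDef := ptrace₂_posDef hσ
  set G : Matrix (n × m) (n × m) ℂ :=
    (1/2 : ℂ) • mlog σ₁₂ -
      (1/2 : ℂ) • mlog (ptrace₂ σ₁₂ ⊗ₖ (1 : Matrix m m ℂ)) +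
      (1/2 : ℂ) • mlog (ptrace₂ ρ₁₂ ⊗ₖ (1 : Matrix m m ℂ)) with hGdef
  have hkHσ : (ptrace₂ σ₁₂ ⊗ₖ (1 : Matrix m m ℂ)).IsHermitian := by
    rw [Matrix.IsHermitian, kron_one_conjTranspose, hσ₁.1]
  have hkHρ : (ptrace₂ ρ₁₂ ⊗ₖ (1 : Matrix m m ℂ)).IsHermitian := by
    rw [Matrix.IsHermitian, kron_one_conjTranspose, hρ₁.1]
  have hG : G.IsHermitian :=
    ((half_smul_isHermitian (mlog_isHermitian hσ.1)).sub
      (half_smul_isHermitian (mlog_isHermitian hkHσ))).add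
      (half_smul_isHermitian (mlog_isHermitian hkHρ))
  have main := key_jensen ρ₁₂ G hρ hG htρ
  refine le_trans (le_of_eq ?_) main
  congr 1
  -- compute the exponent
  have hsmul_re : ∀ (M : Matrix (n × m) (n × m) ℂ),
      (ρ₁₂ * ((1/2 : ℂ) • M)).trace.re = (1/2) * (ρ₁₂ * M).trace.re := by
    intro M
    rw [Matrix.mul_smul, Matrix.trace_smul, smul_eq_mul,
      show ((1:ℂ)/2) = (((1:ℝ)/2 : ℝ) : ℂ) by push_cast; ring, Complex.re_ofReal_mul]
  have hexp : (ρ₁₂ * G).trace.re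
      = (1/2) * (ρ₁₂ * mlog σ₁₂).trace.re
        - (1/2) * (ρ₁₂ * mlog (ptrace₂ σ₁₂ ⊗ₖ (1 : Matrix m m ℂ))).trace.re
        + (1/2) * (ρ₁₂ * mlog (ptrace₂ ρ₁₂ ⊗ₖ (1 : Matrix m m ℂ))).trace.re := by
    rw [hGdef, Matrix.mul_add, Matrix.mul_sub, Matrix.trace_add, Matrix.trace_sub,
      Complex.add_re, Complex.sub_re, hsmul_re, hsmul_re, hsmul_re]
  have hT2 : (ρ₁₂ * mlog (ptrace₂ σ₁₂ ⊗ₖ (1 : Matrix m m ℂ))).trace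
      = (ptrace₂ ρ₁₂ * mlog (ptrace₂ σ₁₂)).trace := by
    rw [mlog_kron hσ₁, trace_mul_kron_one]
  have hT3 : (ρ₁₂ * mlog (ptrace₂ ρ₁₂ ⊗ₖ (1 : Matrix m m ℂ))).trace
      = (ptrace₂ ρ₁₂ * mlog (ptrace₂ ρ₁₂)).trace := by
    rw [mlog_kron hρ₁, trace_mul_kron_one]
  have hRel : ∀ (a b : Matrix (n × m) (n × m) ℂ), relEnt a b
      = (a * mlog a).trace.re - (a * mlog b).trace.re := by
    intro a b
    rw [relEnt, Matrix.mul_sub, Matrix.trace_sub, Complex.sub_re]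
  have hRel₁ : relEnt (ptrace₂ ρ₁₂) (ptrace₂ σ₁₂)
      = (ptrace₂ ρ₁₂ * mlog (ptrace₂ ρ₁₂)).trace.re
        - (ptrace₂ ρ₁₂ * mlog (ptrace₂ σ₁₂)).trace.re := by
    rw [relEnt, Matrix.mul_sub, Matrix.trace_sub, Complex.sub_re]
  rw [hexp, hT2, hT3, hRel ρ₁₂ σ₁₂, hRel₁]
  ring
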